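/- Let (A₀,A₁) be a compatible quasi-Banach couple, 0 < r ≤ ∞ and b ∈ SV with ‖t^{-1/r} b(t)‖_{r,(0,∞)} < ∞. Then the limiting L-space (A₀,A₁)^{𝓛}_{1,r,b,∞,1}, defined by the quasi-norm ‖f‖ = ‖ t^{-1/r} b(t) sup_{0<u<t} u^{-1} K(u,f) ‖_{r,(0,∞)}, coincides (with equivalent quasi-norms) with the Gagliardo completion A₁ +_∞ A₀ = { f ∈ A₀+A₁ : sup_{t>0} t^{-1} K(t,f) < ∞ } normed by sup_{t>0} t^{-1} K(t,f). -/

import Mathlib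

open MeasureTheory Set ENNReal

/-- Two positive functions are equivalent on `(0,∞)`. -/
def EquivOn (f g : ℝ → ℝ) : Prop :=
  ∃ c C : ℝ, 0 < c ∧ ∀ t : ℝ, 0 < t → c * g t ≤ f t ∧ f t ≤ C * g t

/-- `b` is slowly varying on `(0,∞)`: it is positive and measurable, and for every `ε > 0`
the function `t ^ ε * b t` is equivalent to a non-decreasing function while
`t ^ (-ε) * b t` is equivalent to a non-increasing function. -/
def IsSV (b : ℝ → ℝ) : Prop :=
  Measurable b ∧ (∀ t : ℝ, 0 < t → 0 < b t) ∧
  ∀ ε : ℝ, 0 < ε →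
    (∃ g : ℝ → ℝ, MonotoneOn g (Ioi 0) ∧ EquivOn (fun t => t ^ ε * b t) g) ∧
    (∃ g : ℝ → ℝ, AntitoneOn g (Ioi 0) ∧ EquivOn (fun t => t ^ (-ε) * b t) g)

/-- The `L_q` quasi-norm (with values in `ℝ≥0∞`) of a nonnegative function `g`
on the set `s`, `0 < q ≤ ∞`. -/
noncomputable def qN (q : ℝ≥0∞) (g : ℝ → ℝ≥0∞) (s : Set ℝ) : ℝ≥0∞ :=
  if q = ∞ then essSup g (volume.restrict s)
  else (∫⁻ u in s, g u ^ q.toReal) ^ (1 / q.toReal)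

/-- The real number `1/q`, with the convention `1/∞ = 0`. -/
noncomputable def iq (q : ℝ≥0∞) : ℝ := (q⁻¹).toReal

/-- The Peetre K-functional for a compatible couple of quasi-normed spaces, modelled by
two nonnegative quasi-norms `N₀, N₁` on an ambient additive group `E`. -/
noncomputable def Kf {E : Type*} [AddCommGroup E] (N₀ N₁ : E → ℝ) (t : ℝ) (f : E) : ℝ :=
  sInf {r : ℝ | ∃ g h : E, f = g + h ∧ r = N₀ g + t * N₁ h}

section Aux

variable {E : Type*} [AddCommGroup E] (N₀ N₁ : E → ℝ)

lemma Kf_set_nonempty (t : ℝ) (f : E) :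
    {r : ℝ | ∃ g h : E, f = g + h ∧ r = N₀ g + t * N₁ h}.Nonempty :=
  ⟨N₀ f + t * N₁ 0, f, 0, (add_zero f).symm, rfl⟩

lemma Kf_set_bddBelow (hN₀ : ∀ x, 0 ≤ N₀ x) (hN₁ : ∀ x, 0 ≤ N₁ x) (t : ℝ) (ht : 0 ≤ t)
    (f : E) : BddBelow {r : ℝ | ∃ g h : E, f = g + h ∧ r = N₀ g + t * N₁ h} := by
  refine ⟨0, ?_⟩
  rintro x ⟨g, h, -, rfl⟩
  exact add_nonneg (hN₀ g) (mul_nonneg ht (hN₁ h))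

lemma Kf_mono_div (hN₀ : ∀ x, 0 ≤ N₀ x) (hN₁ : ∀ x, 0 ≤ N₁ x) (f : E)
    {s u : ℝ} (hs : 0 < s) (hsu : s ≤ u) :
    Kf N₀ N₁ u f / u ≤ Kf N₀ N₁ s f / s := by
  have hu : 0 < u := lt_of_lt_of_le hs hsu
  have key : (s / u) * Kf N₀ N₁ u f ≤ Kf N₀ N₁ s f := by
    apply le_csInf (Kf_set_nonempty N₀ N₁ s f)
    rintro x ⟨g, h, hf, rfl⟩
    have h1 : Kf N₀ N₁ u f ≤ N₀ g + u * N₁ h :=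
      csInf_le (Kf_set_bddBelow N₀ N₁ hN₀ hN₁ u hu.le f) ⟨g, h, hf, rfl⟩
    have h2 : (s / u) * Kf N₀ N₁ u f ≤ (s / u) * (N₀ g + u * N₁ h) :=
      mul_le_mul_of_nonneg_left h1 (div_nonneg hs.le hu.le)
    have h3 : (s / u) * (N₀ g + u * N₁ h) = (s / u) * N₀ g + s * N₁ h := by
      field_simp
    have h4 : (s / u) * N₀ g ≤ N₀ g := by
      have : s / u ≤ 1 := (div_le_one hu).mpr hsu
      nlinarith [hN₀ g]
    nlinarith [hN₁ h]
  rw [div_le_div_iff₀ hu hs]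
  have h5 := mul_le_mul_of_nonneg_right key hu.le
  have h6 : s / u * Kf N₀ N₁ u f * u = Kf N₀ N₁ u f * s := by field_simp
  nlinarith

end Aux

/-- For a compatible couple, `0 < r ≤ ∞` and `b ∈ SV` with `‖t^(-1/r) b(t)‖_{r,(0,∞)} < ∞`,
the quasi-norm of the limiting L-space `(A₀,A₁)^𝓛_{1,r,b,∞,1}`, namely
`‖ t^(-1/r) b(t) sup_{0<u<t} u⁻¹ K(u,f) ‖_{r,(0,∞)}`, is equivalent to the quasi-norm
`sup_{t>0} t⁻¹ K(t,f)` of the Gagliardo completion `A₁ +_∞ A₀`, uniformly in `f`. -/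
theorem stmt15 {E : Type*} [AddCommGroup E] (N₀ N₁ : E → ℝ)
    (hN₀ : ∀ x, 0 ≤ N₀ x) (hN₁ : ∀ x, 0 ≤ N₁ x)
    (b : ℝ → ℝ) (hb : IsSV b) (r : ℝ≥0∞) (hr : 0 < r)
    (hbfin : qN r (fun t => ENNReal.ofReal (t ^ (-(iq r)) * b t)) (Ioi 0) ≠ ∞) :
    ∃ c C : ℝ≥0∞, c ≠ 0 ∧ C ≠ ∞ ∧ ∀ f : E,
      c * (⨆ t ∈ Ioi (0 : ℝ), ENNReal.ofReal (Kf N₀ N₁ t f / t))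
          ≤ qN r (fun t => ENNReal.ofReal (t ^ (-(iq r)) * b t) *
              ⨆ u ∈ Ioo (0 : ℝ) t, ENNReal.ofReal (Kf N₀ N₁ u f / u)) (Ioi 0) ∧
        qN r (fun t => ENNReal.ofReal (t ^ (-(iq r)) * b t) *
            ⨆ u ∈ Ioo (0 : ℝ) t, ENNReal.ofReal (Kf N₀ N₁ u f / u)) (Ioi 0)
          ≤ C * ⨆ t ∈ Ioi (0 : ℝ), ENNReal.ofReal (Kf N₀ N₁ t f / t) := by
  classical
  set w : ℝ → ℝ≥0∞ := fun t => ENNReal.ofReal (t ^ (-(iq r)) * b t) with hw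
  have hwmeas : Measurable w := by
    apply Measurable.ennreal_ofReal
    exact (measurable_id.pow_const _).mul hb.1
  have hwpos : ∀ t : ℝ, 0 < t → 0 < w t := by
    intro t ht
    exact ENNReal.ofReal_pos.2 (mul_pos (Real.rpow_pos_of_pos ht _) (hb.2.1 t ht))
  -- positivity of qN r w (Ioi 0)
  have hrestr : volume.restrict (Ioi (0:ℝ)) ≠ 0 := by
    simp [Measure.restrict_eq_zero, Real.volume_Ioi]
  haveI : (ae (volume.restrict (Ioi (0:ℝ)))).NeBot := ae_neBot.2 hrestr
  have hQpos : qN r w (Ioi 0) ≠ 0 := by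
    by_cases hrt : r = ∞
    · simp only [qN, if_pos hrt]
      intro h0
      have hle : ∀ᵐ t ∂(volume.restrict (Ioi (0:ℝ))), w t ≤ essSup w (volume.restrict (Ioi (0:ℝ))) :=
        ae_le_essSup
      rw [h0] at hle
      obtain ⟨t, ht0, htm⟩ := (hle.and (ae_restrict_mem measurableSet_Ioi)).exists
      exact absurd (le_antisymm ht0 zero_le) (hwpos t htm).ne'
    · simp only [qN, if_neg hrt]
      have hp : 0 < r.toReal := ENNReal.toReal_pos hr.ne' hrt
      intro h0
      rw [ENNReal.rpow_eq_zero_iff] at h0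
      rcases h0 with ⟨hI, -⟩ | ⟨-, hneg⟩
      · rw [lintegral_eq_zero_iff (hwmeas.pow_const _)] at hI
        obtain ⟨t, ht0, htm⟩ := (hI.and (ae_restrict_mem measurableSet_Ioi)).exists
        have : w t = 0 := by
          simp only [Pi.zero_apply, ENNReal.rpow_eq_zero_iff, hp, hp.not_gt, and_true, and_false,
            or_false] at ht0
          exact ht0
        exact absurd this (hwpos t htm).ne'
      · linarith [one_div_pos.2 hp, hneg]
  refine ⟨qN r w (Ioi 0), qN r w (Ioi 0), hQpos, hbfin, fun f => ?_⟩
  set S : ℝ≥0∞ := ⨆ t ∈ Ioi (0 : ℝ), ENNReal.ofReal (Kf N₀ N₁ t f / t) with hS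
  -- the inner sup is constant equal to S
  have hsup : ∀ t : ℝ, 0 < t →
      (⨆ u ∈ Ioo (0 : ℝ) t, ENNReal.ofReal (Kf N₀ N₁ u f / u)) = S := by
    intro t ht
    apply le_antisymm
    · exact iSup₂_le fun u hu => le_iSup₂_of_le u hu.1 le_rfl
    · apply iSup₂_le
      intro u hu
      have hv1 : (0:ℝ) < min u (t/2) := lt_min hu (by linarith)
      have hv2 : min u (t/2) < t := lt_of_le_of_lt (min_le_right _ _) (by linarith)
      refine le_iSup₂_of_le (min u (t/2)) ⟨hv1, hv2⟩ ?_
      exact ENNReal.ofReal_le_ofReal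
        (Kf_mono_div N₀ N₁ hN₀ hN₁ f hv1 (min_le_left _ _))
  -- the key identity
  have hae : (fun t => w t * ⨆ u ∈ Ioo (0 : ℝ) t, ENNReal.ofReal (Kf N₀ N₁ u f / u))
      =ᵐ[volume.restrict (Ioi (0:ℝ))] fun t => S * w t := by
    filter_upwards [ae_restrict_mem measurableSet_Ioi] with t ht
    rw [hsup t ht, mul_comm]
  have key : qN r (fun t => w t * ⨆ u ∈ Ioo (0 : ℝ) t, ENNReal.ofReal (Kf N₀ N₁ u f / u)) (Ioi 0)
      = qN r w (Ioi 0) * S := by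
    by_cases hrt : r = ∞
    · simp only [qN, if_pos hrt]
      rw [essSup_congr_ae hae, ENNReal.essSup_const_mul, mul_comm]
    · simp only [qN, if_neg hrt]
      have hp : 0 < r.toReal := ENNReal.toReal_pos hr.ne' hrt
      have h1 : (∫⁻ u in Ioi (0:ℝ),
          (w u * ⨆ v ∈ Ioo (0 : ℝ) u, ENNReal.ofReal (Kf N₀ N₁ v f / v)) ^ r.toReal)
          = ∫⁻ u in Ioi (0:ℝ), (S * w u) ^ r.toReal :=
        lintegral_congr_ae (hae.fun_comp (· ^ r.toReal))
      rw [h1]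
      have h2 : ∀ u : ℝ, (S * w u) ^ r.toReal = S ^ r.toReal * w u ^ r.toReal := fun u =>
        ENNReal.mul_rpow_of_nonneg _ _ hp.le
      simp only [h2]
      rw [lintegral_const_mul _ (hwmeas.pow_const _),
        ENNReal.mul_rpow_of_nonneg _ _ (by positivity : (0:ℝ) ≤ 1 / r.toReal),
        ← ENNReal.rpow_mul, mul_one_div, div_self hp.ne', ENNReal.rpow_one, mul_comm]
  constructor
  · rw [key]
  · rw [key]
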